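/- Let D be a principal ideal domain, p ∈ D a prime element, A an n×n matrix over D, ℓ ≥ 0, and let ν_j ∈ D[X] be (p^j)-minimal polynomials of A for 0 ≤ j ≤ ℓ (with ν_0 = 1). Then N_{(p^ℓ)}(A) = Σ_{j=0}^{ℓ} p^{ℓ-j}·ν_j·D[X]. -/

import Mathlib

/-- `f(A) ∈ d·M_n(D)`, i.e. `f` belongs to the `(d)`-ideal `N_{(d)}(A)` of the matrix `A`. -/
def memNullDvd {D : Type*} [CommRing D] {n : ℕ} (A : Matrix (Fin n) (Fin n) D) (d : D)
    (f : Polynomial D) : Prop :=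
  ∃ B : Matrix (Fin n) (Fin n) D, Polynomial.aeval A f = d • B

/-- `f` is a `(d)`-minimal polynomial of `A`: a monic polynomial in `N_{(d)}(A)` of minimal
degree among monic polynomials in `N_{(d)}(A)`. -/
def IsMinPolyMod {D : Type*} [CommRing D] {n : ℕ} (A : Matrix (Fin n) (Fin n) D) (d : D)
    (f : Polynomial D) : Prop :=
  f.Monic ∧ memNullDvd A d f ∧
    ∀ g : Polynomial D, g.Monic → memNullDvd A d g → f.degree ≤ g.degree

open Polynomial Finset

section Aux

variable {D : Type*} [CommRing D] {n : ℕ} {A : Matrix (Fin n) (Fin n) D}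

lemma mnd_zero (d : D) : memNullDvd A d 0 := ⟨0, by simp⟩

lemma mnd_add {d : D} {f g : Polynomial D} (hf : memNullDvd A d f) (hg : memNullDvd A d g) :
    memNullDvd A d (f + g) := by
  obtain ⟨B, hB⟩ := hf; obtain ⟨C, hC⟩ := hg
  exact ⟨B + C, by rw [map_add, hB, hC, smul_add]⟩

lemma mnd_sub {d : D} {f g : Polynomial D} (hf : memNullDvd A d f) (hg : memNullDvd A d g) :
    memNullDvd A d (f - g) := by
  obtain ⟨B, hB⟩ := hf; obtain ⟨C, hC⟩ := hg
  exact ⟨B - C, by rw [map_sub, hB, hC, smul_sub]⟩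

lemma mnd_mul_left {d : D} (g : Polynomial D) {f : Polynomial D} (hf : memNullDvd A d f) :
    memNullDvd A d (g * f) := by
  obtain ⟨B, hB⟩ := hf
  exact ⟨(Polynomial.aeval A g) * B, by rw [map_mul, hB, mul_smul_comm]⟩

lemma mnd_C_mul {d : D} (e : D) {f : Polynomial D} (hf : memNullDvd A d f) :
    memNullDvd A (e * d) (Polynomial.C e * f) := by
  obtain ⟨B, hB⟩ := hf
  refine ⟨B, ?_⟩
  rw [map_mul, hB, aeval_C, ← Algebra.smul_def, smul_smul]

lemma mnd_pow_le (p : D) {j k : ℕ} (h : j ≤ k) {f : Polynomial D}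
    (hf : memNullDvd A (p ^ k) f) : memNullDvd A (p ^ j) f := by
  obtain ⟨B, hB⟩ := hf
  exact ⟨p ^ (k - j) • B, by rw [hB, smul_smul, ← pow_add, Nat.add_sub_cancel' h]⟩

lemma mnd_sum {d : D} {ι : Type*} (s : Finset ι) (F : ι → Polynomial D)
    (h : ∀ i ∈ s, memNullDvd A d (F i)) : memNullDvd A d (∑ i ∈ s, F i) := by
  classical
  induction s using Finset.induction_on with
  | empty => simpa using mnd_zero d
  | insert _ _ hx ih =>
    rw [Finset.sum_insert hx]
    exact mnd_add (h _ (Finset.mem_insert_self _ _))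
      (ih fun i hi => h i (Finset.mem_insert_of_mem hi))

end Aux

section Main

variable {D : Type*} [CommRing D] [IsDomain D] [IsPrincipalIdealRing D]
    {n : ℕ} {A : Matrix (Fin n) (Fin n) D}

/-- Monotonicity of degrees of `(p^j)`-minimal polynomials. -/
lemma dmono (p : D) (ℓ : ℕ) (ν : ℕ → Polynomial D)
    (hν : ∀ j, j ≤ ℓ → IsMinPolyMod A (p ^ j) (ν j))
    {i j : ℕ} (hij : i ≤ j) (hj : j ≤ ℓ) : (ν i).natDegree ≤ (ν j).natDegree :=
  natDegree_le_natDegree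
    ((hν i (hij.trans hj)).2.2 (ν j) (hν j hj).1 (mnd_pow_le p hij (hν j hj).2.1))

/-- Bezout monicization: an element of `N_{(p^K)}` with leading coefficient prime to `p`
has degree at least `deg ν_K`. -/
lemma lemA0 (p : D) (hp : Prime p) (ℓ : ℕ) (ν : ℕ → Polynomial D)
    (hν : ∀ j, j ≤ ℓ → IsMinPolyMod A (p ^ j) (ν j))
    {K : ℕ} (hK : K ≤ ℓ) {f : Polynomial D} (hf0 : f ≠ 0)
    (hf : memNullDvd A (p ^ K) f) (hlead : ¬ p ∣ f.leadingCoeff) :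
    (ν K).natDegree ≤ f.natDegree := by
  have hcop : IsCoprime f.leadingCoeff (p ^ K) :=
    ((hp.coprime_iff_not_dvd.2 hlead).symm).pow_right
  obtain ⟨b, cc, hbc⟩ := hcop
  set m := f.natDegree with hm
  set h : Polynomial D := Polynomial.C b * f + Polynomial.C (cc * p ^ K) * X ^ m with hh
  have hco : h.coeff m = 1 := by
    have h1 : (Polynomial.C b * f).coeff m = b * f.leadingCoeff := by
      rw [coeff_C_mul, hm, coeff_natDegree]
    have h2 : (Polynomial.C (cc * p ^ K) * X ^ m).coeff m = cc * p ^ K := by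
      rw [coeff_C_mul, coeff_X_pow, if_pos rfl, mul_one]
    rw [hh, coeff_add, h1, h2, hbc]
  have hdle : h.natDegree ≤ m := by
    refine (natDegree_add_le _ _).trans (max_le (natDegree_C_mul_le _ _) ?_)
    exact (natDegree_C_mul_le _ _).trans (natDegree_X_pow_le _)
  have hmonic : h.Monic := monic_of_natDegree_le_of_coeff_eq_one m hdle hco
  have hmm : h.natDegree = m :=
    le_antisymm hdle (le_natDegree_of_ne_zero (by rw [hco]; exact one_ne_zero))
  have hmem : memNullDvd A (p ^ K) h := by
    refine mnd_add (mnd_mul_left _ hf) ⟨cc • A ^ m, ?_⟩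
    rw [map_mul, aeval_C, map_pow, aeval_X, ← Algebra.smul_def, smul_smul,
      mul_comm cc (p ^ K)]

  have := natDegree_le_natDegree ((hν K hK).2.2 h hmonic hmem)
  rwa [hmm] at this

/-- Key lemma: if `f ∈ N_{(p^K)}` has leading coefficient of exact `p`-valuation `t < K`,
then `deg ν_{K-t} ≤ deg f`. -/
lemma crux (p : D) (hp : Prime p) (ℓ : ℕ) (ν : ℕ → Polynomial D) (hν0 : ν 0 = 1)
    (hν : ∀ j, j ≤ ℓ → IsMinPolyMod A (p ^ j) (ν j)) :
    ∀ t K : ℕ, 0 < t → t < K → K ≤ ℓ →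
      (∀ K', K' < K → K' ≤ ℓ → ∀ f : Polynomial D, memNullDvd A (p ^ K') f →
        ∃ c : ℕ → Polynomial D,
          f = ∑ j ∈ Finset.range (K' + 1), Polynomial.C (p ^ (K' - j)) * ν j * c j) →
      ∀ g : Polynomial D, g ≠ 0 → memNullDvd A (p ^ K) g →
        p ^ t ∣ g.leadingCoeff → ¬ p ^ (t + 1) ∣ g.leadingCoeff →
        (ν (K - t)).natDegree ≤ g.natDegree := by
  intro t
  induction t with
  | zero => intro K h; exact absurd h (lt_irrefl 0)
  | succ τ iht =>
    intro K _ htK hKℓ ih g hg0 hgN h1 h2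
    have hK1 : K - 1 < K := by omega
    have hK1ℓ : K - 1 ≤ ℓ := by omega
    obtain ⟨c, hcg⟩ := ih (K - 1) hK1 hK1ℓ g (mnd_pow_le p (by omega) hgN)
    set π := Ideal.Quotient.mk (Ideal.span ({p} : Set D)) with hπdef
    haveI : Nontrivial (D ⧸ Ideal.span ({p} : Set D)) := Ideal.Quotient.nontrivial_iff.mpr (by
      rw [Ne, Ideal.span_singleton_eq_top]; exact hp.not_isUnit)
    have hπ0 : ∀ x : D, p ∣ x → π x = 0 := fun x hx =>
      Ideal.Quotient.eq_zero_iff_mem.2 (Ideal.mem_span_singleton.2 hx)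
    have hmapg : g.map π = (ν (K - 1)).map π * (c (K - 1)).map π := by
      rw [hcg, Polynomial.map_sum, Finset.sum_range_succ, Finset.sum_eq_zero, zero_add]
      · rw [Nat.sub_self, pow_zero, Polynomial.map_mul, Polynomial.map_mul, map_C, map_one,
          Polynomial.C_1, one_mul]
      · intro j hj
        rw [Finset.mem_range] at hj
        rw [Polynomial.map_mul, Polynomial.map_mul, map_C,
          hπ0 _ (dvd_pow_self p (by omega : K - 1 - j ≠ 0)), Polynomial.C_0, zero_mul, zero_mul]
    by_cases h0 : g.map π = 0
    · have hdvd : ∀ i, p ∣ g.coeff i := by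
        intro i
        have hc0 : (g.map π).coeff i = 0 := by rw [h0]; simp
        rw [coeff_map] at hc0
        exact Ideal.mem_span_singleton.1 (Ideal.Quotient.eq_zero_iff_mem.1 hc0)
      obtain ⟨g₁, hg₁⟩ := (Polynomial.C_dvd_iff_dvd_coeff p g).2 hdvd
      have hg₁0 : g₁ ≠ 0 := by rintro rfl; rw [mul_zero] at hg₁; exact hg0 hg₁
      have hpne : p ≠ 0 := hp.ne_zero
      have hlead : g.leadingCoeff = p * g₁.leadingCoeff := by
        rw [hg₁, leadingCoeff_mul, leadingCoeff_C]
      have hdeg : g.natDegree = g₁.natDegree := by rw [hg₁, natDegree_C_mul hpne]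
      have hmem : memNullDvd A (p ^ (K - 1)) g₁ := by
        obtain ⟨B, hB⟩ := hgN
        refine ⟨B, ?_⟩
        have hK' : p ^ K = p * p ^ (K - 1) := by
          rw [← pow_succ']; congr 1; omega
        have h' : p • (Polynomial.aeval A g₁) = p • (p ^ (K - 1) • B) := by
          rw [smul_smul, ← hK', ← hB, hg₁, map_mul, aeval_C, ← Algebra.smul_def]
        ext i j
        have hij := congrArg (fun M : Matrix (Fin n) (Fin n) D => M i j) h'
        simp only [Matrix.smul_apply, smul_eq_mul] at hij
        exact mul_left_cancel₀ hpne hij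
      have h1' : p ^ τ ∣ g₁.leadingCoeff := by
        obtain ⟨w, hw⟩ := h1
        refine ⟨w, mul_left_cancel₀ hpne ?_⟩
        rw [← hlead, hw, pow_succ', mul_assoc]
      have h2' : ¬ p ^ (τ + 1) ∣ g₁.leadingCoeff := by
        rintro ⟨w, hw⟩
        exact h2 ⟨w, by rw [hlead, hw]; ring⟩
      rcases Nat.eq_zero_or_pos τ with hτ | hτ
      · subst hτ
        have hres := lemA0 p hp ℓ ν hν hK1ℓ hg₁0 hmem (by simpa using h2')
        rw [show K - (0 + 1) = K - 1 by omega, hdeg]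
        exact hres
      · have hres := iht (K - 1) hτ (by omega) hK1ℓ
          (fun K' h' h'' => ih K' (by omega) h'') g₁ hg₁0 hmem h1' h2'
        rw [show K - (τ + 1) = K - 1 - τ by omega, hdeg]
        exact hres
    · have hcne : (c (K - 1)).map π ≠ 0 := fun h => h0 (by rw [hmapg, h, mul_zero])
      have hmon : ((ν (K - 1)).map π).Monic := ((hν (K - 1) hK1ℓ).1).map π
      have hnd : (ν (K - 1)).natDegree ≤ (g.map π).natDegree := by
        rw [hmapg, natDegree_mul' (by
          rw [hmon.leadingCoeff, one_mul]; exact leadingCoeff_ne_zero.2 hcne),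
          ((hν (K - 1) hK1ℓ).1).natDegree_map π]
        exact Nat.le_add_right _ _
      calc (ν (K - (τ + 1))).natDegree
          ≤ (ν (K - 1)).natDegree := dmono p ℓ ν hν (by omega) hK1ℓ
        _ ≤ (g.map π).natDegree := hnd
        _ ≤ g.natDegree := natDegree_map_le

lemma master (p : D) (hp : Prime p) (ℓ : ℕ) (ν : ℕ → Polynomial D) (hν0 : ν 0 = 1)
    (hν : ∀ j, j ≤ ℓ → IsMinPolyMod A (p ^ j) (ν j)) :
    ∀ K : ℕ, K ≤ ℓ → ∀ f : Polynomial D, memNullDvd A (p ^ K) f →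
      ∃ c : ℕ → Polynomial D,
        f = ∑ j ∈ Finset.range (K + 1), Polynomial.C (p ^ (K - j)) * ν j * c j := by
  intro K
  induction K using Nat.strong_induction_on with
  | _ K ih =>
  intro hK f hf
  rcases Nat.eq_zero_or_pos K with hK0 | hK0
  · subst hK0
    exact ⟨fun _ => f, by simp [hν0]⟩
  have step : ∀ N : ℕ, ∀ f : Polynomial D, f.degree < (N : WithBot ℕ) →
      memNullDvd A (p ^ K) f →
      ∃ c : ℕ → Polynomial D,
        f = ∑ j ∈ Finset.range (K + 1), Polynomial.C (p ^ (K - j)) * ν j * c j := by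
    intro N
    induction N with
    | zero =>
      intro f hdeg _
      have hf0 : f = 0 := degree_eq_bot.1 (Nat.WithBot.lt_zero_iff.1 (by exact_mod_cast hdeg))
      exact ⟨fun _ => 0, by simp [hf0]⟩
    | succ N ihN =>
      intro f hdeg hf
      by_cases hf0 : f = 0
      · exact ⟨fun _ => 0, by simp [hf0]⟩
      classical
      set a := f.leadingCoeff with ha'
      have ha : a ≠ 0 := leadingCoeff_ne_zero.2 hf0
      set m := f.natDegree with hm'
      set t := Nat.findGreatest (fun i => p ^ i ∣ a) K with ht'
      have ht : p ^ t ∣ a := by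
        rw [ht']
        exact Nat.findGreatest_spec (P := fun i => p ^ i ∣ a) (Nat.zero_le K) (by simp)
      have htK : t ≤ K := Nat.findGreatest_le K
      obtain ⟨u, hu⟩ := ht
      have hdK : (ν (K - t)).natDegree ≤ m := by
        rcases eq_or_lt_of_le htK with h | h
        · have h0 : K - t = 0 := by omega
          rw [h0, hν0]
          simp
        · have hnot : ¬ p ^ (t + 1) ∣ a :=
            Nat.findGreatest_is_greatest (P := fun i => p ^ i ∣ a) (n := K)
              (by rw [← ht']; omega) (by omega)
          rcases Nat.eq_zero_or_pos t with ht0 | ht0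
          · have hnd : ¬ p ∣ a := by
              rw [ht0] at hnot; simpa using hnot
            have := lemA0 p hp ℓ ν hν hK hf0 hf hnd
            rw [show K - t = K by omega]
            exact this
          · exact crux p hp ℓ ν hν0 hν t K ht0 h hK ih f hf0 hf ⟨u, hu⟩ hnot
      set s := m - (ν (K - t)).natDegree with hs'
      set q : Polynomial D := ν (K - t) * X ^ s with hq'
      have hνmon : (ν (K - t)).Monic := (hν (K - t) (by omega)).1
      have hqm : q.Monic := hνmon.mul (monic_X_pow s)
      have hqd : q.natDegree = m := by
        rw [hq', natDegree_mul hνmon.ne_zero (pow_ne_zero s X_ne_zero), natDegree_X_pow]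
        omega
      set S : Polynomial D := Polynomial.C a * q with hS'
      have hSd : S.natDegree = m := by rw [hS', natDegree_C_mul ha, hqd]
      have hSl : S.leadingCoeff = a := by
        rw [hS', leadingCoeff_mul, leadingCoeff_C, hqm.leadingCoeff, mul_one]
      have hS0 : S ≠ 0 := fun hz => ha (by rw [← hSl, hz, leadingCoeff_zero])
      have hSN : memNullDvd A (p ^ K) S := by
        have hrw : S = (Polynomial.C u * X ^ s) * (Polynomial.C (p ^ t) * ν (K - t)) := by
          rw [hS', hq', hu]
          push_cast [Polynomial.C_mul]
          ring
        rw [hrw]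
        apply mnd_mul_left
        have hmm := mnd_C_mul (A := A) (p ^ t) (hν (K - t) (by omega)).2.1
        rwa [← pow_add, Nat.add_sub_cancel' htK] at hmm
      have hdSf : S.degree = f.degree := by
        rw [degree_eq_natDegree hS0, degree_eq_natDegree hf0, hSd]
      have hsub : (f - S).degree < f.degree := degree_sub_lt hdSf.symm hf0 (by rw [hSl])
      have hNlt : (f - S).degree < (N : WithBot ℕ) := by
        have h1 : f.natDegree < N + 1 :=
          (natDegree_lt_iff_degree_lt hf0).2 (by exact_mod_cast hdeg)
        calc (f - S).degree < f.degree := hsub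
          _ ≤ (f.natDegree : WithBot ℕ) := degree_le_natDegree
          _ ≤ (N : WithBot ℕ) := by exact_mod_cast Nat.lt_succ_iff.1 h1
      obtain ⟨c, hc⟩ := ihN (f - S) hNlt (mnd_sub hf hSN)
      refine ⟨fun j => c j + (if j = K - t then Polynomial.C u * X ^ s else 0), ?_⟩
      have hsum2 : ∑ j ∈ Finset.range (K + 1),
          Polynomial.C (p ^ (K - j)) * ν j * (if j = K - t then Polynomial.C u * X ^ s else 0)
          = S := by
        rw [Finset.sum_eq_single (K - t)]
        · rw [if_pos rfl, Nat.sub_sub_self htK, hS', hq', hu]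
          push_cast [Polynomial.C_mul]
          ring
        · intro j _ hj; rw [if_neg hj, mul_zero]
        · intro hmem; exact absurd (Finset.mem_range.2 (by omega)) hmem
      calc f = (f - S) + S := by ring
        _ = ∑ j ∈ Finset.range (K + 1), Polynomial.C (p ^ (K - j)) * ν j *
              (c j + (if j = K - t then Polynomial.C u * X ^ s else 0)) := by
            rw [hc, ← hsum2, ← Finset.sum_add_distrib]
            exact Finset.sum_congr rfl fun j _ => by ring
  exact step (f.natDegree + 1) f
    (lt_of_le_of_lt degree_le_natDegree (by exact_mod_cast Nat.lt_succ_self _)) hf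

end Main

/-- Let `p` be prime, `ℓ ≥ 0`, and `ν_j` `(p^j)`-minimal polynomials of `A`
for `0 ≤ j ≤ ℓ` (with `ν_0 = 1`). Then `N_{(p^ℓ)}(A) = Σ_{j=0}^{ℓ} p^{ℓ-j}·ν_j·D[X]`
(stated elementwise). -/
theorem stmt5 {D : Type*} [CommRing D] [IsDomain D] [IsPrincipalIdealRing D]
    (p : D) (hp : Prime p) (ℓ : ℕ)
    {n : ℕ} (A : Matrix (Fin n) (Fin n) D)
    (ν : ℕ → Polynomial D) (hν0 : ν 0 = 1)
    (hν : ∀ j, j ≤ ℓ → IsMinPolyMod A (p ^ j) (ν j)) :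
    ∀ f : Polynomial D, memNullDvd A (p ^ ℓ) f ↔
      ∃ c : ℕ → Polynomial D,
        f = ∑ j ∈ Finset.range (ℓ + 1), Polynomial.C (p ^ (ℓ - j)) * ν j * c j := by
  intro f
  constructor
  · intro hf
    exact master p hp ℓ ν hν0 hν ℓ le_rfl f hf
  · rintro ⟨c, rfl⟩
    apply mnd_sum
    intro j hj
    have hjℓ : j ≤ ℓ := by
      rw [Finset.mem_range] at hj; omega
    have h1 := mnd_C_mul (A := A) (p ^ (ℓ - j)) (hν j hjℓ).2.1
    rw [← pow_add, Nat.sub_add_cancel hjℓ] at h1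
    have h2 := mnd_mul_left (c j) h1
    rwa [show c j * (Polynomial.C (p ^ (ℓ - j)) * ν j)
      = Polynomial.C (p ^ (ℓ - j)) * ν j * c j from by ring] at h2
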